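/- Let S be a finite subset of ℤ^ℓ spanning ℝ^ℓ, and let f(a) = Σ_{v∈S} f_v a₁^{v₁}⋯a_ℓ^{v_ℓ} be a Laurent polynomial with all coefficients f_v > 0. If f has a critical point in ℝ_{>0}^ℓ, then for any c₁,…,c_ℓ ∈ ℤ_{≥0} and d₁,…,d_ℓ ∈ ℝ, the integral ∫_{ℝ_{>0}^ℓ} e^{-f(a)} a₁^{d₁}⋯a_ℓ^{d_ℓ} |log a₁|^{c₁}⋯|log a_ℓ|^{c_ℓ} da₁⋯da_ℓ is finite. -/

import Mathlib

open MeasureTheory Set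


lemma aux_quad {δ ε : ℝ} (M : ℝ) (hδ : 0 < δ) (hε : 0 < ε) {y : ℝ} (hy : 0 ≤ y) :
    M * y - δ * Real.exp (ε * y) ≤ M ^ 2 / (δ * ε ^ 2) := by
  have h2 : (ε * y) ^ 2 / 2 ≤ Real.exp (ε * y) := by
    nlinarith [Real.quadratic_le_exp_of_nonneg (mul_nonneg hε.le hy), mul_nonneg hε.le hy]
  rw [le_div_iff₀ (by positivity), ← sub_nonneg]
  have h4 : (δ * ε ^ 2) * (δ * ((ε * y) ^ 2 / 2)) ≤ (δ * ε ^ 2) * (δ * Real.exp (ε * y)) := by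
    have := mul_le_mul_of_nonneg_left h2 (le_of_lt hδ)
    exact mul_le_mul_of_nonneg_left this (by positivity)
  nlinarith [sq_nonneg (δ * ε ^ 2 * y - M)]

lemma aux_pow_le {y : ℝ} (hy : 0 ≤ y) (c : ℕ) : y ^ c ≤ (c.factorial : ℝ) * Real.exp y := by
  have h := Real.pow_div_factorial_le_exp (x := y) hy c
  have hf : (0:ℝ) < c.factorial := by exact_mod_cast c.factorial_pos
  rw [div_le_iff₀ hf] at h
  linarith

lemma aux_1d {δ ε : ℝ} (d : ℝ) (c : ℕ) (hδ : 0 < δ) (hε : 0 < ε) :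
    IntegrableOn (fun t : ℝ => Real.exp (-(δ * Real.exp (ε * |Real.log t|))) *
      (t ^ d * |Real.log t| ^ c)) (Set.Ioi 0) := by
  set h : ℝ → ℝ := fun t => Real.exp (-(δ * Real.exp (ε * |Real.log t|))) *
      (t ^ d * |Real.log t| ^ c) with hh
  have hlog : ContinuousOn Real.log (Set.Ioi (0:ℝ)) :=
    Real.continuousOn_log.mono (by intro x hx; simp [ne_of_gt (mem_Ioi.1 hx)])
  have hcont : ContinuousOn h (Set.Ioi (0:ℝ)) := by
    refine ContinuousOn.mul ?_ (ContinuousOn.mul ?_ (hlog.abs.pow c))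
    · exact Real.continuous_exp.comp_continuousOn
        (((continuousOn_const.mul (Real.continuous_exp.comp_continuousOn
          (continuousOn_const.mul hlog.abs)))).neg)
    · exact continuousOn_id.rpow_const (fun x hx => Or.inl (ne_of_gt (mem_Ioi.1 hx)))
  have hnn : ∀ t ∈ Set.Ioi (0:ℝ), 0 ≤ h t := by
    intro t ht
    exact mul_nonneg (Real.exp_pos _).le
      (mul_nonneg (Real.rpow_nonneg (le_of_lt ht) _) (pow_nonneg (abs_nonneg _) _))
  -- pointwise bound: h t ≤ c! * exp((|d|+1+A)|log t| - δ exp(ε|log t|)) for any A via absorbing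
  have hb : ∀ t ∈ Set.Ioi (0:ℝ), ∀ A : ℝ, 0 ≤ A →
      h t ≤ (c.factorial : ℝ) * Real.exp (((|d|+1+A)^2) / (δ * ε^2)) * Real.exp (-(A * |Real.log t|)) := by
    intro t ht A hA
    have ht0 : (0:ℝ) < t := mem_Ioi.1 ht
    set y := |Real.log t| with hy
    have hy0 : 0 ≤ y := abs_nonneg _
    have htd : t ^ d ≤ Real.exp (|d| * y) := by
      rw [Real.rpow_def_of_pos ht0]
      apply Real.exp_le_exp.2
      calc Real.log t * d ≤ |Real.log t * d| := le_abs_self _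
        _ = |d| * y := by rw [abs_mul, mul_comm]
    have hyc : y ^ c ≤ (c.factorial : ℝ) * Real.exp y := aux_pow_le hy0 c
    have step1 : h t ≤ (c.factorial : ℝ) * Real.exp ((|d|+1) * y - δ * Real.exp (ε * y)) := by
      have e1 : Real.exp ((|d|+1) * y - δ * Real.exp (ε * y))
          = Real.exp (-(δ * Real.exp (ε * y))) * (Real.exp (|d| * y) * Real.exp y) := by
        rw [← Real.exp_add, ← Real.exp_add]; ring_nf
      rw [hh]
      simp only
      rw [mul_comm ((c.factorial : ℝ)) _] at hyc ⊢
      calc Real.exp (-(δ * Real.exp (ε * y))) * (t ^ d * y ^ c)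
          ≤ Real.exp (-(δ * Real.exp (ε * y))) * (Real.exp (|d| * y) * (Real.exp y * (c.factorial : ℝ))) := by
            apply mul_le_mul_of_nonneg_left _ (Real.exp_pos _).le
            exact mul_le_mul htd hyc (pow_nonneg hy0 c) (Real.exp_pos _).le
        _ = Real.exp ((|d|+1) * y - δ * Real.exp (ε * y)) * (c.factorial : ℝ) := by
            rw [e1]; ring
    have step2 : Real.exp ((|d|+1) * y - δ * Real.exp (ε * y))
        ≤ Real.exp (((|d|+1+A)^2) / (δ * ε^2)) * Real.exp (-(A * y)) := by
      rw [← Real.exp_add]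
      apply Real.exp_le_exp.2
      have := aux_quad (|d|+1+A) hδ hε hy0
      nlinarith [mul_nonneg hA hy0]
    calc h t ≤ (c.factorial : ℝ) * Real.exp ((|d|+1) * y - δ * Real.exp (ε * y)) := step1
      _ ≤ (c.factorial : ℝ) * (Real.exp (((|d|+1+A)^2) / (δ * ε^2)) * Real.exp (-(A * y))) := by
          apply mul_le_mul_of_nonneg_left step2 (by positivity)
      _ = (c.factorial : ℝ) * Real.exp (((|d|+1+A)^2) / (δ * ε^2)) * Real.exp (-(A * y)) := by ring
  rw [show Set.Ioi (0:ℝ) = Set.Ioc 0 1 ∪ Set.Ioi 1 from (Set.Ioc_union_Ioi_eq_Ioi zero_le_one).symm]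
  apply IntegrableOn.union
  · -- on (0,1]: bounded by constant
    apply Integrable.mono' (g := fun _ : ℝ => (c.factorial : ℝ) * Real.exp (((|d|+1+0)^2) / (δ * ε^2)))
    · exact integrableOn_const (by simp [Real.volume_Ioc])
    · exact (hcont.mono (Set.Ioc_subset_Ioi_self)).aestronglyMeasurable measurableSet_Ioc
    · filter_upwards [ae_restrict_mem measurableSet_Ioc] with t ht
      have ht' : t ∈ Set.Ioi (0:ℝ) := Set.Ioc_subset_Ioi_self ht
      rw [Real.norm_eq_abs, abs_of_nonneg (hnn t ht')]
      calc h t ≤ (c.factorial : ℝ) * Real.exp (((|d|+1+0)^2) / (δ * ε^2)) * Real.exp (-(0 * |Real.log t|)) :=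
            hb t ht' 0 le_rfl
        _ = (c.factorial : ℝ) * Real.exp (((|d|+1+0)^2) / (δ * ε^2)) := by simp
  · -- on (1,∞): bounded by C * t^(-2)
    apply Integrable.mono' (g := fun t : ℝ => ((c.factorial : ℝ) * Real.exp (((|d|+1+2)^2) / (δ * ε^2))) * t ^ (-2 : ℝ))
    · exact (integrableOn_Ioi_rpow_of_lt (by norm_num) one_pos).const_mul _
    · exact (hcont.mono (fun x hx => lt_trans one_pos (mem_Ioi.1 hx))).aestronglyMeasurable measurableSet_Ioi
    · filter_upwards [ae_restrict_mem measurableSet_Ioi] with t ht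
      have ht1 : (1:ℝ) < t := mem_Ioi.1 ht
      have ht' : t ∈ Set.Ioi (0:ℝ) := lt_trans one_pos ht1
      rw [Real.norm_eq_abs, abs_of_nonneg (hnn t ht')]
      have hlt : Real.exp (-(2 * |Real.log t|)) = t ^ (-2 : ℝ) := by
        rw [Real.rpow_def_of_pos (lt_trans one_pos ht1)]
        congr 1
        rw [abs_of_nonneg (Real.log_nonneg ht1.le)]
        ring
      calc h t ≤ (c.factorial : ℝ) * Real.exp (((|d|+1+2)^2) / (δ * ε^2)) * Real.exp (-(2 * |Real.log t|)) :=
            hb t ht' 2 (by norm_num)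
        _ = ((c.factorial : ℝ) * Real.exp (((|d|+1+2)^2) / (δ * ε^2))) * t ^ (-2 : ℝ) := by rw [hlt]

lemma balance {ℓ : ℕ} (S : Finset (Fin ℓ → ℤ)) (fc : (Fin ℓ → ℤ) → ℝ)
    (a₀ : Fin ℓ → ℝ) (ha₀ : ∀ i, 0 < a₀ i)
    (hcrit : fderiv ℝ (fun a : Fin ℓ → ℝ => ∑ v ∈ S, fc v * ∏ i, a i ^ v i) a₀ = 0)
    (k : Fin ℓ) :
    ∑ v ∈ S, (fc v * ∏ i, a₀ i ^ v i) * (v k : ℝ) = 0 := by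
  classical
  -- derivative of each monomial
  have hmono : ∀ v : Fin ℓ → ℤ, HasFDerivAt (fun a : Fin ℓ → ℝ => ∏ i, a i ^ v i)
      (∑ i, (∏ j ∈ Finset.univ.erase i, a₀ j ^ v j) •
        (((v i : ℝ) * a₀ i ^ (v i - 1)) • (ContinuousLinearMap.proj i : (Fin ℓ → ℝ) →L[ℝ] ℝ))) a₀ := by
    intro v
    apply HasFDerivAt.finset_prod (u := Finset.univ) (g := fun i (a : Fin ℓ → ℝ) => a i ^ v i)
    intro i _
    have h1 : HasDerivAt (fun x : ℝ => x ^ v i) ((v i : ℝ) * a₀ i ^ (v i - 1)) (a₀ i) :=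
      hasDerivAt_zpow (v i) (a₀ i) (Or.inl (ne_of_gt (ha₀ i)))
    have h2 : HasFDerivAt (fun a : Fin ℓ → ℝ => a i)
        (ContinuousLinearMap.proj i : (Fin ℓ → ℝ) →L[ℝ] ℝ) a₀ :=
      (ContinuousLinearMap.proj i : (Fin ℓ → ℝ) →L[ℝ] ℝ).hasFDerivAt
    exact h1.comp_hasFDerivAt a₀ h2
  have hf : HasFDerivAt (fun a : Fin ℓ → ℝ => ∑ v ∈ S, fc v * ∏ i, a i ^ v i)
      (∑ v ∈ S, fc v • (∑ i, (∏ j ∈ Finset.univ.erase i, a₀ j ^ v j) •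
        (((v i : ℝ) * a₀ i ^ (v i - 1)) • (ContinuousLinearMap.proj i : (Fin ℓ → ℝ) →L[ℝ] ℝ)))) a₀ := by
    apply HasFDerivAt.fun_sum
    intro v _
    exact (hmono v).const_mul (fc v)
  have hD : (∑ v ∈ S, fc v • (∑ i, (∏ j ∈ Finset.univ.erase i, a₀ j ^ v j) •
        (((v i : ℝ) * a₀ i ^ (v i - 1)) • (ContinuousLinearMap.proj i : (Fin ℓ → ℝ) →L[ℝ] ℝ)))) = 0 := by
    rw [← hf.fderiv]; exact hcrit
  have hDk := congrArg (fun (L : (Fin ℓ → ℝ) →L[ℝ] ℝ) => L (Pi.single k 1)) hD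
  simp only [ContinuousLinearMap.sum_apply, ContinuousLinearMap.smul_apply,
    ContinuousLinearMap.proj_apply, ContinuousLinearMap.zero_apply, smul_eq_mul] at hDk
  -- inner sum collapses to i = k
  have hsingle : ∀ v : Fin ℓ → ℤ,
      (∑ i, (∏ j ∈ Finset.univ.erase i, a₀ j ^ v j) *
        (((v i : ℝ) * a₀ i ^ (v i - 1)) * ((Pi.single k 1 : Fin ℓ → ℝ) i)))
      = (∏ j ∈ Finset.univ.erase k, a₀ j ^ v j) * ((v k : ℝ) * a₀ k ^ (v k - 1)) := by
    intro v
    rw [Finset.sum_eq_single_of_mem k (Finset.mem_univ k)]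
    · simp
    · intro i _ hik
      simp [Pi.single_eq_of_ne hik]
  simp only [hsingle] at hDk
  -- multiply by a₀ k
  have key := congrArg (fun x : ℝ => x * a₀ k) hDk
  simp only [Finset.sum_mul, zero_mul] at key
  rw [← key]
  apply Finset.sum_congr rfl
  intro v _
  have h1 : a₀ k ^ (v k - 1) * a₀ k = a₀ k ^ (v k) := by
    rw [← zpow_add_one₀ (ne_of_gt (ha₀ k))]
    ring_nf
  have h2 : (∏ j ∈ Finset.univ.erase k, a₀ j ^ v j) * a₀ k ^ (v k) = ∏ i, a₀ i ^ v i := by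
    rw [mul_comm, ← Finset.mul_prod_erase Finset.univ _ (Finset.mem_univ k)]
  calc (fc v * ∏ i, a₀ i ^ v i) * (v k : ℝ)
      = fc v * ((∏ j ∈ Finset.univ.erase k, a₀ j ^ v j) * a₀ k ^ (v k)) * (v k : ℝ) := by rw [h2]
    _ = fc v * ((∏ j ∈ Finset.univ.erase k, a₀ j ^ v j) * ((v k : ℝ) * a₀ k ^ (v k - 1))) * a₀ k := by
        rw [← h1]; ring

lemma exists_eps {ℓ : ℕ} (S : Finset (Fin ℓ → ℤ)) (hS : S.Nonempty)
    (hspan : Submodule.span ℝ ((fun (v : Fin ℓ → ℤ) (i : Fin ℓ) => (v i : ℝ)) '' (S : Set (Fin ℓ → ℤ))) = ⊤)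
    (w : (Fin ℓ → ℤ) → ℝ) (hw : ∀ v ∈ S, 0 < w v)
    (hbal : ∀ k, ∑ v ∈ S, w v * (v k : ℝ) = 0)
    (u : Fin ℓ → ℝ) :
    ∃ ε > 0, ∃ p : (Fin ℓ → ℤ) → ℝ, (∀ v ∈ S, 0 ≤ p v) ∧ (∑ v ∈ S, p v = 1) ∧
      ∀ k, ∑ v ∈ S, p v * (v k : ℝ) = ε * u k := by
  classical
  -- get a representation of u
  have hu : u ∈ Submodule.span ℝ ((fun (v : Fin ℓ → ℤ) (i : Fin ℓ) => (v i : ℝ)) '' (S : Set (Fin ℓ → ℤ))) := by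
    rw [hspan]; trivial
  rw [Finsupp.mem_span_image_iff_linearCombination] at hu
  obtain ⟨l, hl, hlu⟩ := hu
  set μ : (Fin ℓ → ℤ) → ℝ := fun v => l v with hμdef
  have hrep : ∑ v ∈ S, μ v • (fun i => (v i : ℝ)) = u := by
    rw [← hlu, Finsupp.linearCombination_apply, Finsupp.sum]
    refine (Finset.sum_subset (fun x hx => ?_) (fun v _ hv => ?_)).symm
    · exact (Finsupp.mem_supported ℝ l).1 hl hx
    · simp [hμdef, Finsupp.notMem_support_iff.1 hv]
  have hrepk : ∀ k, ∑ v ∈ S, μ v * (v k : ℝ) = u k := by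
    intro k
    have := congrFun hrep k
    simpa [Finset.sum_apply] using this
  -- choose t
  set t : ℝ := S.inf' hS (fun v => w v / (|μ v| + 1)) with htdef
  have ht : 0 < t := by
    rw [htdef, Finset.lt_inf'_iff]
    intro v hv
    have := hw v hv
    positivity
  have hpos : ∀ v ∈ S, 0 < w v + t * μ v := by
    intro v hv
    have h1 : t ≤ w v / (|μ v| + 1) := Finset.inf'_le _ hv
    have h2 : 0 ≤ |μ v| := abs_nonneg _
    have h3 : μ v ≥ -|μ v| := neg_abs_le _
    have h4 : t * (|μ v| + 1) ≤ w v := by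
      rw [← le_div_iff₀ (by linarith)]; exact h1
    nlinarith
  set T : ℝ := ∑ v ∈ S, (w v + t * μ v) with hTdef
  have hT : 0 < T := Finset.sum_pos (fun v hv => hpos v hv) hS
  refine ⟨t / T, by positivity, fun v => (w v + t * μ v) / T, ?_, ?_, ?_⟩
  · intro v hv; exact le_of_lt (div_pos (hpos v hv) hT)
  · rw [← Finset.sum_div, ← hTdef, div_self (ne_of_gt hT)]
  · intro k
    have : ∑ v ∈ S, (w v + t * μ v) / T * (v k : ℝ)
        = (∑ v ∈ S, w v * (v k : ℝ) + t * ∑ v ∈ S, μ v * (v k : ℝ)) / T := by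
      rw [Finset.mul_sum, ← Finset.sum_add_distrib, Finset.sum_div]
      apply Finset.sum_congr rfl
      intro v _; ring
    rw [this, hbal k, hrepk k]
    ring

lemma amgm_bound {ℓ : ℕ} (S : Finset (Fin ℓ → ℤ)) (hS : S.Nonempty)
    (fc : (Fin ℓ → ℤ) → ℝ) (hfc : ∀ v ∈ S, 0 < fc v)
    (p : (Fin ℓ → ℤ) → ℝ) (hp0 : ∀ v ∈ S, 0 ≤ p v) (hp1 : ∑ v ∈ S, p v = 1)
    (ε : ℝ) (u : Fin ℓ → ℝ)
    (hpu : ∀ k, ∑ v ∈ S, p v * (v k : ℝ) = ε * u k)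
    (a : Fin ℓ → ℝ) (ha : ∀ i, 0 < a i) :
    Real.exp (ε * ∑ k, u k * Real.log (a k)) ≤
      (S.inf' hS fc)⁻¹ * ∑ v ∈ S, fc v * ∏ i, a i ^ v i := by
  classical
  set z : (Fin ℓ → ℤ) → ℝ := fun v => ∏ i, a i ^ v i with hzdef
  have hz : ∀ v, z v = Real.exp (∑ i, (v i : ℝ) * Real.log (a i)) := by
    intro v
    rw [Real.exp_sum]
    apply Finset.prod_congr rfl
    intro i _
    rw [← Real.rpow_intCast (a i) (v i), Real.rpow_def_of_pos (ha i)]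
    ring_nf
  have hz0 : ∀ v ∈ S, 0 ≤ z v := fun v _ => by
    rw [hz]; exact (Real.exp_pos _).le
  -- LHS rewrite
  have hL : ε * ∑ k, u k * Real.log (a k) = ∑ v ∈ S, p v * ∑ k, (v k : ℝ) * Real.log (a k) := by
    rw [Finset.mul_sum]
    have : ∀ k, ε * (u k * Real.log (a k)) = (∑ v ∈ S, p v * (v k : ℝ)) * Real.log (a k) := by
      intro k; rw [hpu k]; ring
    rw [Finset.sum_congr rfl (fun k _ => this k)]
    calc ∑ k, (∑ v ∈ S, p v * (v k : ℝ)) * Real.log (a k)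
        = ∑ k, ∑ v ∈ S, p v * ((v k : ℝ) * Real.log (a k)) := by
          apply Finset.sum_congr rfl; intro k _
          rw [Finset.sum_mul]; apply Finset.sum_congr rfl; intro v _; ring
      _ = ∑ v ∈ S, ∑ k, p v * ((v k : ℝ) * Real.log (a k)) := Finset.sum_comm
      _ = ∑ v ∈ S, p v * ∑ k, (v k : ℝ) * Real.log (a k) := by
          apply Finset.sum_congr rfl; intro v _; rw [Finset.mul_sum]
  -- geometric mean ≤ arithmetic mean
  have hgm : Real.exp (ε * ∑ k, u k * Real.log (a k)) = ∏ v ∈ S, z v ^ p v := by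
    rw [hL, Real.exp_sum]
    apply Finset.prod_congr rfl
    intro v _
    rw [hz, mul_comm, Real.exp_mul]
  have ham := Real.geom_mean_le_arith_mean_weighted S p z hp0 hp1 hz0
  -- compare coefficients
  set K : ℝ := (S.inf' hS fc)⁻¹ with hKdef
  have hinf : 0 < S.inf' hS fc := by
    rw [Finset.lt_inf'_iff]; exact hfc
  have hK : 0 < K := inv_pos.2 hinf
  have hcomp : ∑ v ∈ S, p v * z v ≤ K * ∑ v ∈ S, fc v * z v := by
    rw [Finset.mul_sum]
    apply Finset.sum_le_sum
    intro v hv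
    have hp1v : p v ≤ 1 := by
      rw [← hp1]
      exact Finset.single_le_sum hp0 hv
    have h1 : (1:ℝ) ≤ K * fc v := by
      rw [hKdef, ← div_eq_inv_mul, le_div_iff₀ hinf, one_mul]
      exact Finset.inf'_le _ hv
    calc p v * z v ≤ (K * fc v) * z v :=
          mul_le_mul_of_nonneg_right (hp1v.trans h1) (hz0 v hv)
      _ = K * (fc v * z v) := by ring
  rw [hgm]
  exact ham.trans hcomp


open MeasureTheory

/-- Lemma C (convexhull): if a Laurent polynomial `f(a) = Σ_{v ∈ S} f_v a^v` with positive
coefficients, whose exponent set `S ⊂ ℤ^ℓ` spans `ℝ^ℓ`, has a critical point in the positive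
orthant, then `∫_{ℝ_{>0}^ℓ} e^{-f(a)} ∏ a_i^{d_i} |log a_i|^{c_i} da < ∞`. -/
theorem integrable_exp_neg_laurent
    (ℓ : ℕ) (S : Finset (Fin ℓ → ℤ))
    (hspan : Submodule.span ℝ ((fun (v : Fin ℓ → ℤ) (i : Fin ℓ) => (v i : ℝ)) '' (S : Set (Fin ℓ → ℤ))) = ⊤)
    (fc : (Fin ℓ → ℤ) → ℝ) (hfc : ∀ v ∈ S, 0 < fc v)
    (a₀ : Fin ℓ → ℝ) (ha₀ : ∀ i, 0 < a₀ i)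
    (hcrit : fderiv ℝ (fun a : Fin ℓ → ℝ => ∑ v ∈ S, fc v * ∏ i, a i ^ v i) a₀ = 0)
    (c : Fin ℓ → ℕ) (d : Fin ℓ → ℝ) :
    IntegrableOn
      (fun a : Fin ℓ → ℝ =>
        Real.exp (-(∑ v ∈ S, fc v * ∏ i, a i ^ v i)) *
          ∏ i, (a i ^ d i * |Real.log (a i)| ^ c i))
      {a : Fin ℓ → ℝ | ∀ i, 0 < a i} := by
  classical
  rcases Nat.eq_zero_or_pos ℓ with hℓ | hℓ
  · subst hℓ
    have hset : {a : Fin 0 → ℝ | ∀ i, 0 < a i} = Set.univ := by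
      ext a; simp [Fin.elim0]
    have hconst : (fun a : Fin 0 → ℝ =>
        Real.exp (-(∑ v ∈ S, fc v * ∏ i, a i ^ v i)) *
          ∏ i, (a i ^ d i * |Real.log (a i)| ^ c i))
        = fun _ => Real.exp (-(∑ v ∈ S, fc v)) := by
      funext a
      simp
    rw [hset, hconst]
    refine integrableOn_const ?_
    have : (volume : Measure (Fin 0 → ℝ)) Set.univ = 1 := by
      rw [show (Set.univ : Set (Fin 0 → ℝ)) = Set.pi Set.univ (fun _ => Set.univ) by simp]
      rw [MeasureTheory.volume_pi, MeasureTheory.Measure.pi_pi]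
      simp
    rw [this]; norm_num
  -- main case ℓ > 0
  haveI : Nonempty (Fin ℓ) := ⟨⟨0, hℓ⟩⟩
  have hS : S.Nonempty := by
    by_contra hSe
    rw [Finset.not_nonempty_iff_eq_empty] at hSe
    subst hSe
    simp only [Finset.coe_empty, Set.image_empty, Submodule.span_empty] at hspan
    exact absurd hspan bot_ne_top
  set f : (Fin ℓ → ℝ) → ℝ := fun a => ∑ v ∈ S, fc v * ∏ i, a i ^ v i with hfdef
  set w : (Fin ℓ → ℤ) → ℝ := fun v => fc v * ∏ i, a₀ i ^ v i with hwdef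
  have hw : ∀ v ∈ S, 0 < w v := by
    intro v hv
    exact mul_pos (hfc v hv) (Finset.prod_pos fun i _ => zpow_pos (ha₀ i) _)
  have hbal : ∀ k, ∑ v ∈ S, w v * (v k : ℝ) = 0 := balance S fc a₀ ha₀ hcrit
  set K : ℝ := (S.inf' hS fc)⁻¹ with hKdef
  have hinf : 0 < S.inf' hS fc := by rw [Finset.lt_inf'_iff]; exact hfc
  have hK : 0 < K := inv_pos.2 hinf
  have key : ∀ u : Fin ℓ → ℝ, ∃ ε > 0, ∀ a : Fin ℓ → ℝ, (∀ i, 0 < a i) →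
      Real.exp (ε * ∑ k, u k * Real.log (a k)) ≤ K * f a := by
    intro u
    obtain ⟨ε, hε, p, hp0, hp1, hpu⟩ := exists_eps S hS hspan w hw hbal u
    exact ⟨ε, hε, fun a ha => amgm_bound S hS fc hfc p hp0 hp1 ε u hpu a ha⟩
  have key2 : ∀ k : Fin ℓ, ∀ s : ℝ, ∃ ε > 0, ∀ a : Fin ℓ → ℝ, (∀ i, 0 < a i) →
      Real.exp (ε * (s * Real.log (a k))) ≤ K * f a := by
    intro k s
    obtain ⟨ε, hε, hb⟩ := key (fun j => if j = k then s else 0)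
    refine ⟨ε, hε, fun a ha => ?_⟩
    have := hb a ha
    rwa [show (∑ j, (if j = k then s else 0) * Real.log (a j)) = s * Real.log (a k) by
      simp [ite_mul]] at this
  choose ε₁ hε₁ h₁ using fun k => key2 k 1
  choose ε₂ hε₂ h₂ using fun k => key2 k (-1)
  set ε : ℝ := Finset.univ.inf' Finset.univ_nonempty (fun k => min (ε₁ k) (ε₂ k)) with hεdef
  have hε : 0 < ε := by
    rw [hεdef, Finset.lt_inf'_iff]
    intro k _
    exact lt_min (hε₁ k) (hε₂ k)
  have hfa : ∀ a : Fin ℓ → ℝ, (∀ i, 0 < a i) → 0 < f a := by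
    intro a ha
    exact Finset.sum_pos (fun v hv => mul_pos (hfc v hv)
      (Finset.prod_pos fun i _ => zpow_pos (ha i) _)) hS
  have habs : ∀ a : Fin ℓ → ℝ, (∀ i, 0 < a i) → ∀ k,
      Real.exp (ε * |Real.log (a k)|) ≤ K * f a := by
    intro a ha k
    rcases le_or_gt 0 (Real.log (a k)) with h | h
    · rw [abs_of_nonneg h]
      refine le_trans (Real.exp_le_exp.2 ?_) (by simpa using h₁ k a ha)
      have : ε ≤ ε₁ k := le_trans (Finset.inf'_le _ (Finset.mem_univ k)) (min_le_left _ _)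
      nlinarith
    · rw [abs_of_neg h]
      refine le_trans (Real.exp_le_exp.2 ?_) (h₂ k a ha)
      have : ε ≤ ε₂ k := le_trans (Finset.inf'_le _ (Finset.mem_univ k)) (min_le_right _ _)
      nlinarith
  set δ : ℝ := ((ℓ : ℝ) * K)⁻¹ with hδdef
  have hℓR : (0:ℝ) < ℓ := by exact_mod_cast hℓ
  have hδ : 0 < δ := by positivity
  have hfge : ∀ a : Fin ℓ → ℝ, (∀ i, 0 < a i) →
      δ * ∑ k, Real.exp (ε * |Real.log (a k)|) ≤ f a := by
    intro a ha
    have h1 : ∑ k, Real.exp (ε * |Real.log (a k)|) ≤ ∑ _k : Fin ℓ, K * f a :=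
      Finset.sum_le_sum (fun k _ => habs a ha k)
    rw [Finset.sum_const, Finset.card_univ, Fintype.card_fin, nsmul_eq_mul] at h1
    rw [hδdef]
    rw [inv_mul_le_iff₀ (by positivity)]
    calc ∑ k, Real.exp (ε * |Real.log (a k)|) ≤ (ℓ:ℝ) * (K * f a) := h1
      _ = (ℓ:ℝ) * K * f a := by ring
  -- the dominating product function
  set g : Fin ℓ → ℝ → ℝ := fun k => Set.indicator (Set.Ioi 0)
    (fun t => Real.exp (-(δ * Real.exp (ε * |Real.log t|))) * (t ^ d k * |Real.log t| ^ c k))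
    with hgdef
  have hgint : ∀ k, Integrable (g k) := by
    intro k
    rw [hgdef]
    exact (integrable_indicator_iff measurableSet_Ioi).2 (aux_1d (d k) (c k) hδ hε)
  have hGint : Integrable (fun a : Fin ℓ → ℝ => ∏ k, g k (a k)) :=
    Integrable.fintype_prod (fun k => hgint k)
  have hO : MeasurableSet {a : Fin ℓ → ℝ | ∀ i, 0 < a i} := by
    rw [show {a : Fin ℓ → ℝ | ∀ i, 0 < a i} = Set.pi Set.univ (fun _ => Set.Ioi 0) by
      ext a; simp [Set.mem_pi]]
    exact MeasurableSet.univ_pi (fun i => measurableSet_Ioi)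
  have hcontF : ContinuousOn (fun a : Fin ℓ → ℝ =>
      Real.exp (-(∑ v ∈ S, fc v * ∏ i, a i ^ v i)) *
        ∏ i, (a i ^ d i * |Real.log (a i)| ^ c i)) {a : Fin ℓ → ℝ | ∀ i, 0 < a i} := by
    apply ContinuousOn.mul
    · apply Real.continuous_exp.comp_continuousOn
      apply ContinuousOn.neg
      apply continuousOn_finset_sum
      intro v _
      apply continuousOn_const.mul
      apply continuousOn_finset_prod
      intro i _
      refine ((continuous_apply i).continuousOn).zpow₀ (v i) ?_
      intro x hx
      exact Or.inl (ne_of_gt (hx i))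
    · apply continuousOn_finset_prod
      intro i _
      apply ContinuousOn.mul
      · refine ((continuous_apply i).continuousOn).rpow_const ?_
        intro x hx
        exact Or.inl (ne_of_gt (hx i))
      · refine ContinuousOn.pow (ContinuousOn.abs (ContinuousOn.log ((continuous_apply i).continuousOn) ?_)) (c i)
        intro x hx
        exact ne_of_gt (hx i)
  apply Integrable.mono' hGint.integrableOn (hcontF.aestronglyMeasurable hO)
  filter_upwards [ae_restrict_mem hO] with a ha
  have haO : ∀ i, 0 < a i := ha
  have hP0 : (0:ℝ) ≤ ∏ i, (a i ^ d i * |Real.log (a i)| ^ c i) :=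
    Finset.prod_nonneg fun i _ => mul_nonneg (Real.rpow_nonneg (haO i).le _)
      (pow_nonneg (abs_nonneg _) _)
  rw [Real.norm_eq_abs, abs_of_nonneg (mul_nonneg (Real.exp_pos _).le hP0)]
  have hgval : ∀ k, g k (a k) = Real.exp (-(δ * Real.exp (ε * |Real.log (a k)|))) *
      (a k ^ d k * |Real.log (a k)| ^ c k) := by
    intro k
    rw [hgdef]
    exact Set.indicator_of_mem (haO k) _
  have hprod : ∏ k, g k (a k)
      = (∏ k, Real.exp (-(δ * Real.exp (ε * |Real.log (a k)|)))) *
        ∏ k, (a k ^ d k * |Real.log (a k)| ^ c k) := by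
    rw [Finset.prod_congr rfl (fun k _ => hgval k), Finset.prod_mul_distrib]
  have hexp : Real.exp (-(∑ v ∈ S, fc v * ∏ i, a i ^ v i))
      ≤ ∏ k, Real.exp (-(δ * Real.exp (ε * |Real.log (a k)|))) := by
    rw [← Real.exp_sum]
    apply Real.exp_le_exp.2
    have h1 := hfge a haO
    have h2 : ∑ k, -(δ * Real.exp (ε * |Real.log (a k)|))
        = -(δ * ∑ k, Real.exp (ε * |Real.log (a k)|)) := by
      rw [Finset.mul_sum, ← Finset.sum_neg_distrib]
    rw [h2]
    have : f a = ∑ v ∈ S, fc v * ∏ i, a i ^ v i := rfl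
    linarith [h1]
  rw [hprod]
  exact mul_le_mul_of_nonneg_right hexp hP0
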